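/- Let w be a positive weight on ℝ with all moments finite, (P_n) its monic orthogonal polynomials with recurrence coefficients α_n, β_n and norms h_n. Then for n ≥ 1, (1/h_{n-1}) ∫ x³ P_n(x) P_{n-1}(x) w(x) dx = β_n (α_{n-1}² + α_{n-1} α_n + α_n² + β_{n-1} + β_n + β_{n+1}). -/

import Mathlib

open MeasureTheory Polynomial

noncomputable def Iw (w : ℝ → ℝ) (p : Polynomial ℝ) : ℝ := ∫ x : ℝ, p.eval x * w x

lemma Iw_integrable (w : ℝ → ℝ) (hw_pos : ∀ x, 0 < w x)
    (hmom : ∀ k : ℕ, Integrable (fun x : ℝ => |x| ^ k * w x))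
    (p : Polynomial ℝ) : Integrable (fun x : ℝ => p.eval x * w x) := by
  have hwm : AEStronglyMeasurable w volume := by
    have := (hmom 0).aestronglyMeasurable
    simpa using this
  have hpow : ∀ i : ℕ, Integrable (fun x : ℝ => x ^ i * w x) := by
    intro i
    refine (hmom i).mono' ((measurable_id.pow_const i).aestronglyMeasurable.mul hwm) ?_
    filter_upwards with x
    have : |x ^ i * w x| = |x| ^ i * w x := by
      rw [abs_mul, abs_pow, abs_of_pos (hw_pos x)]
    rw [Real.norm_eq_abs, this]
  have he : (fun x : ℝ => p.eval x * w x)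
      = fun x => ∑ i ∈ Finset.range (p.natDegree + 1), p.coeff i * (x ^ i * w x) := by
    funext x
    rw [Polynomial.eval_eq_sum_range, Finset.sum_mul]
    exact Finset.sum_congr rfl fun i _ => by ring
  rw [he]
  exact integrable_finset_sum _ fun i _ => (hpow i).const_mul _

/-- Moment identity: for `n ≥ 1`,
`(1/h_{n-1}) ∫ x³ P_n P_{n-1} w = β_n (α_{n-1}² + α_{n-1} α_n + α_n²
+ β_{n-1} + β_n + β_{n+1})` (with the convention `β_0 = 0`). -/
theorem x_cube_offdiagonal_moment_identity
    (w : ℝ → ℝ) (P : ℕ → Polynomial ℝ) (α β h : ℕ → ℝ)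
    (hw_pos : ∀ x, 0 < w x)
    (hmom : ∀ k : ℕ, Integrable (fun x : ℝ => |x| ^ k * w x))
    (hmonic : ∀ j, (P j).Monic)
    (hdeg : ∀ j, (P j).natDegree = j)
    (horth : ∀ j k, j ≠ k → ∫ x : ℝ, (P j).eval x * (P k).eval x * w x = 0)
    (hh : ∀ j, h j = ∫ x : ℝ, ((P j).eval x) ^ 2 * w x)
    (hβ0 : β 0 = 0)
    (hrec0 : Polynomial.X * P 0 = P 1 + Polynomial.C (α 0) * P 0)
    (hrec : ∀ n, 1 ≤ n →
      Polynomial.X * P n = P (n + 1) + Polynomial.C (α n) * P n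
        + Polynomial.C (β n) * P (n - 1)) :
    ∀ n, 1 ≤ n →
      (1 / h (n - 1)) * ∫ x : ℝ, x ^ 3 * (P n).eval x * (P (n - 1)).eval x * w x
        = β n * ((α (n - 1)) ^ 2 + α (n - 1) * α n + (α n) ^ 2
            + β (n - 1) + β n + β (n + 1)) := by
  intro n hn
  obtain ⟨m, rfl⟩ : ∃ m, n = m + 1 := ⟨n - 1, (Nat.succ_pred_eq_of_pos hn).symm⟩
  simp only [Nat.add_sub_cancel]
  have hint := Iw_integrable w hw_pos hmom
  have Iadd : ∀ p q : Polynomial ℝ, Iw w (p + q) = Iw w p + Iw w q := by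
    intro p q
    have he : (fun x : ℝ => (p + q).eval x * w x)
        = fun x => p.eval x * w x + q.eval x * w x := by
      funext x; simp [add_mul]
    simp only [Iw]
    rw [he]
    exact integral_add (hint p) (hint q)
  have Ismul : ∀ (c : ℝ) (p : Polynomial ℝ), Iw w (C c * p) = c * Iw w p := by
    intro c p
    simp only [Iw, eval_mul, eval_C, mul_assoc]
    exact integral_const_mul c _
  have Icomm : ∀ p q : Polynomial ℝ, Iw w (p * q) = Iw w (q * p) := by
    intro p q; rw [mul_comm]
  have hE0 : ∀ j k, j ≠ k → Iw w (P j * P k) = 0 := by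
    intro j k hjk
    simpa [Iw, eval_mul] using horth j k hjk
  have hEd : ∀ j, Iw w (P j * P j) = h j := by
    intro j
    rw [hh j]
    simp [Iw, eval_mul, pow_two]
  have hrec' : ∀ j, (X : Polynomial ℝ) * P j
      = P (j + 1) + C (α j) * P j + C (β j) * P (j - 1) := by
    intro j
    cases j with
    | zero => simp [hrec0, hβ0]
    | succ k => simpa using hrec (k + 1) (Nat.succ_le_succ (Nat.zero_le k))
  have step : ∀ (q : Polynomial ℝ) (j : ℕ),
      Iw w (q * (X * P j)) = Iw w (q * P (j + 1)) + α j * Iw w (q * P j)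
        + β j * Iw w (q * P (j - 1)) := by
    intro q j
    have harg : q * ((X : Polynomial ℝ) * P j)
        = q * P (j + 1) + (C (α j) * (q * P j) + C (β j) * (q * P (j - 1))) := by
      rw [hrec' j]; ring
    rw [harg, Iadd, Iadd, Ismul, Ismul]; ring
  have A1a : ∀ j, Iw w (P j * (X * P j)) = α j * h j := by
    intro j
    rw [step]
    cases j with
    | zero =>
      rw [hE0 0 1 (by omega), hEd, hβ0]; ring
    | succ k =>
      simp only [Nat.add_sub_cancel]
      rw [hE0 (k+1) (k+2) (by omega), hEd, hE0 (k+1) k (by omega)]; ring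
  have A1b : ∀ j, Iw w (P (j+1) * (X * P j)) = h (j + 1) := by
    intro j
    rw [step, hEd, hE0 (j+1) j (by omega), hE0 (j+1) (j-1) (by omega)]
    ring
  have A1c : ∀ j, Iw w (P j * (X * P (j+1))) = β (j+1) * h j := by
    intro j
    rw [step]
    simp only [Nat.add_sub_cancel]
    rw [hE0 j (j+2) (by omega), hE0 j (j+1) (by omega), hEd]
    ring
  have hrel : ∀ j, h (j + 1) = β (j + 1) * h j := by
    intro j
    rw [← A1b j, ← A1c j]
    congr 1
    ring
  have A1z : ∀ j k, k + 2 ≤ j → Iw w (P j * (X * P k)) = 0 := by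
    intro j k hjk
    rw [step, hE0 j (k+1) (by omega), hE0 j k (by omega), hE0 j (k-1) (by omega)]
    ring
  have hT1 : Iw w ((X^2 * P (m+1)) * P (m+1))
      = β (m+1) * h m * (β (m+2) + α (m+1)^2 + β (m+1)) := by
    have e : (X^2 * P (m+1)) * P (m+1) = (X * P (m+1)) * ((X:Polynomial ℝ) * P (m+1)) := by
      ring
    rw [e, step]
    simp only [Nat.add_sub_cancel]
    rw [Icomm (X * P (m+1)) (P (m+1+1)), Icomm (X * P (m+1)) (P (m+1)),
      Icomm (X * P (m+1)) (P m)]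
    rw [A1b (m+1), A1a (m+1), A1c m, hrel (m+1), hrel m]
    have h2 : m + 1 + 1 = m + 2 := rfl
    rw [h2]
    ring
  have hT2 : Iw w ((X^2 * P (m+1)) * P m)
      = β (m+1) * h m * (α (m+1) + α m) := by
    have e : (X^2 * P (m+1)) * P m = (X * P m) * ((X:Polynomial ℝ) * P (m+1)) := by
      ring
    rw [e, step]
    simp only [Nat.add_sub_cancel]
    rw [Icomm (X * P m) (P (m+1+1)), Icomm (X * P m) (P (m+1)), Icomm (X * P m) (P m)]
    rw [A1z (m+1+1) m (by omega), A1b m, A1a m, hrel m]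
    ring
  have hT3 : β m * Iw w ((X^2 * P (m+1)) * P (m-1)) = β m * (β (m+1) * h m) := by
    cases m with
    | zero => rw [hβ0]; ring
    | succ k =>
      simp only [Nat.add_sub_cancel]
      congr 1
      have e : (X^2 * P (k+1+1)) * P k = (X * P k) * ((X:Polynomial ℝ) * P (k+1+1)) := by
        ring
      rw [e, step]
      simp only [Nat.add_sub_cancel]
      rw [Icomm (X * P k) (P (k+1+1+1)), Icomm (X * P k) (P (k+1+1)),
        Icomm (X * P k) (P (k+1))]
      rw [A1z (k+1+1+1) k (by omega), A1z (k+1+1) k (by omega), A1b k, hrel k]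
      ring
  have key : Iw w (X ^ 3 * P (m + 1) * P m)
      = β (m+1) * h m * (α m ^ 2 + α m * α (m+1) + α (m+1) ^ 2
          + β m + β (m+1) + β (m+2)) := by
    have e1 : (X:Polynomial ℝ) ^ 3 * P (m + 1) * P m
        = (X ^ 2 * P (m + 1)) * ((X:Polynomial ℝ) * P m) := by ring
    rw [e1, step, hT1, hT2, hT3]
    ring
  have hpos : 0 < h m := by
    rw [hh m]
    have hPne : P m ≠ 0 := (hmonic m).ne_zero
    have hfin : {x : ℝ | (P m).IsRoot x}.Finite := Polynomial.finite_setOf_isRoot hPne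
    have hintg : Integrable (fun x : ℝ => (P m).eval x ^ 2 * w x) := by
      have := hint (P m * P m)
      simpa [eval_mul, pow_two] using this
    have hnn : 0 ≤ fun x : ℝ => (P m).eval x ^ 2 * w x := by
      intro x; exact mul_nonneg (sq_nonneg _) (hw_pos x).le
    rw [integral_pos_iff_support_of_nonneg hnn hintg]
    have hsupp : Function.support (fun x : ℝ => (P m).eval x ^ 2 * w x)
        = {x : ℝ | (P m).IsRoot x}ᶜ := by
      ext x
      simp [Function.support, IsRoot, (hw_pos x).ne', pow_eq_zero_iff]
    rw [hsupp]
    by_contra hc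
    push_neg at hc
    have h0 : volume ({x : ℝ | (P m).IsRoot x}ᶜ) = 0 := le_antisymm hc zero_le
    have h1 : volume ({x : ℝ | (P m).IsRoot x}) = 0 := hfin.measure_zero _
    have h2 := measure_univ_le_add_compl (μ := volume) {x : ℝ | (P m).IsRoot x}
    rw [Real.volume_univ, h0, h1] at h2
    simp at h2
  have hT : Iw w (X ^ 3 * P (m + 1) * P m)
      = ∫ x : ℝ, x ^ 3 * (P (m+1)).eval x * (P m).eval x * w x := by
    simp only [Iw, eval_mul, eval_pow, eval_X]
  rw [← hT, key]
  field_simp
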